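/- Given the un-whitening map, errors in the whitened components translate to the original space with factor bounded as: ‖(A)_j - (Â)_j‖ ≤ s_max(A) · √(λ̃_max/λ̃_min) · ‖v_j - v̂_j‖, where (Â)_j := (1/√(λ̃_j)) U Diag(γ^{1/2}) v̂_j. -/

import Mathlib

open Matrix

theorem unwhitening_error_transfer
    (d k : ℕ) (hkd : k ≤ d) [NeZero k]
    (A : Matrix (Fin d) (Fin k) ℝ) (hA : A.rank = k)
    (lamt : Fin k → ℝ) (hlamt : ∀ j, 0 < lamt j)
    (U : Matrix (Fin d) (Fin k) ℝ) (hU : Uᵀ * U = 1)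
    (γ : Fin k → ℝ) (hγ : ∀ j, 0 < γ j)
    (hSVD : U * diagonal γ * Uᵀ = A * diagonal lamt * Aᵀ)
    (W : Matrix (Fin d) (Fin k) ℝ)
    (hW : W = U * diagonal (fun j => (Real.sqrt (γ j))⁻¹))
    (v vhat : Fin k → Fin k → ℝ)
    (hv : ∀ j i, v j i = Real.sqrt (lamt j) * ∑ a, W a i * A a j)
    (Ahat : Matrix (Fin d) (Fin k) ℝ)
    (hAhat : ∀ i j, Ahat i j
      = (Real.sqrt (lamt j))⁻¹ * ∑ l, U i l * Real.sqrt (γ l) * vhat j l)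
    (smax : ℝ)
    (hsmax : ∀ u : EuclideanSpace ℝ (Fin k),
      ‖Matrix.toEuclideanLin A u‖ ≤ smax * ‖u‖) :
    ∀ j : Fin k,
      Real.sqrt (∑ i, (A i j - Ahat i j) ^ 2)
        ≤ smax * Real.sqrt
            ((Finset.univ.sup' Finset.univ_nonempty lamt)
              / (Finset.univ.inf' Finset.univ_nonempty lamt))
          * Real.sqrt (∑ i, (v j i - vhat j i) ^ 2) := by
  intro j
  set lmax := Finset.univ.sup' Finset.univ_nonempty lamt with hlmaxdef
  set lmin := Finset.univ.inf' Finset.univ_nonempty lamt with hlmindef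
  have hlmin_pos : 0 < lmin := by
    rw [hlmindef, Finset.lt_inf'_iff]
    exact fun b _ => hlamt b
  have hlminle : lmin ≤ lamt j := Finset.inf'_le _ (Finset.mem_univ j)
  have hlmaxle : ∀ m, lamt m ≤ lmax := fun m => Finset.le_sup' _ (Finset.mem_univ m)
  have hlmax_pos : 0 < lmax := lt_of_lt_of_le (hlamt j) (hlmaxle j)
  -- smax is nonnegative
  have hsmax0 : 0 ≤ smax := by
    have h := hsmax (EuclideanSpace.single ⟨0, Nat.pos_of_ne_zero (NeZero.ne k)⟩ (1:ℝ))
    rw [EuclideanSpace.norm_single] at h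
    simpa using le_trans (norm_nonneg _) h
  -- operator bound in mulVec / squared form
  have hsmax' : ∀ x : Fin k → ℝ, ∑ i, (A *ᵥ x) i ^ 2 ≤ smax ^ 2 * ∑ i, x i ^ 2 := by
    intro x
    have h := hsmax ((WithLp.equiv 2 (Fin k → ℝ)).symm x)
    rw [WithLp.equiv_symm_apply, Matrix.toEuclideanLin_toLp] at h
    simp only [EuclideanSpace.norm_eq, PiLp.toLp_apply, Real.norm_eq_abs, sq_abs,
      Matrix.toLin'_apply] at h
    have h2 : Real.sqrt (∑ i, (A *ᵥ x) i ^ 2) ^ 2 ≤ (smax * Real.sqrt (∑ i, x i ^ 2)) ^ 2 :=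
      pow_le_pow_left₀ (Real.sqrt_nonneg _) h 2
    rwa [Real.sq_sqrt (Finset.sum_nonneg fun i _ => sq_nonneg _), mul_pow,
      Real.sq_sqrt (Finset.sum_nonneg fun i _ => sq_nonneg _)] at h2
  -- transpose operator bound
  have hsmaxT : ∀ u : Fin d → ℝ, ∑ m, (Aᵀ *ᵥ u) m ^ 2 ≤ smax ^ 2 * ∑ i, u i ^ 2 := by
    intro u
    set w := Aᵀ *ᵥ u with hw
    have h1 : ∑ m, w m ^ 2 = u ⬝ᵥ (A *ᵥ w) := by
      rw [Matrix.dotProduct_mulVec, hw, Matrix.mulVec_transpose]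
      simp [dotProduct, pow_two]
    have hCS : (u ⬝ᵥ (A *ᵥ w)) ^ 2 ≤ (∑ i, u i ^ 2) * (∑ i, (A *ᵥ w) i ^ 2) := by
      simpa [dotProduct] using Finset.sum_mul_sq_le_sq_mul_sq Finset.univ u (A *ᵥ w)
    have ht0 : 0 ≤ ∑ m, w m ^ 2 := Finset.sum_nonneg fun _ _ => sq_nonneg _
    have h2 : (∑ m, w m ^ 2) ^ 2 ≤ (∑ i, u i ^ 2) * (smax ^ 2 * ∑ m, w m ^ 2) := by
      calc (∑ m, w m ^ 2) ^ 2 = (u ⬝ᵥ (A *ᵥ w)) ^ 2 := by rw [h1]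
        _ ≤ (∑ i, u i ^ 2) * (∑ i, (A *ᵥ w) i ^ 2) := hCS
        _ ≤ (∑ i, u i ^ 2) * (smax ^ 2 * ∑ m, w m ^ 2) :=
            mul_le_mul_of_nonneg_left (hsmax' w) (Finset.sum_nonneg fun _ _ => sq_nonneg _)
    rcases eq_or_lt_of_le ht0 with h0 | hpos
    · rw [← h0]; positivity
    · nlinarith [h2, hpos]
  -- diagonal γ expression
  have hDg : diagonal γ = Uᵀ * (A * diagonal lamt * Aᵀ) * U := by
    rw [← hSVD]
    simp only [← Matrix.mul_assoc]
    rw [hU, Matrix.one_mul, Matrix.mul_assoc, hU, Matrix.mul_one]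
  have hDg2 : diagonal γ = (Aᵀ * U)ᵀ * diagonal lamt * (Aᵀ * U) := by
    rw [hDg, Matrix.transpose_mul, Matrix.transpose_transpose]
    simp only [Matrix.mul_assoc]
  -- columns of U are unit vectors
  have hcol : ∀ l, ∑ i, (U i l) ^ 2 = 1 := by
    intro l
    have h1 := congrFun (congrFun hU l) l
    simp only [Matrix.mul_apply, Matrix.transpose_apply, Matrix.one_apply_eq] at h1
    rw [← h1]
    exact Finset.sum_congr rfl fun i _ => (pow_two _)
  -- bound on γ
  have hγle : ∀ l, γ l ≤ smax ^ 2 * lmax := by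
    intro l
    have hγeq : γ l = ∑ m, lamt m * ((Aᵀ *ᵥ (fun i => U i l)) m) ^ 2 := by
      have h := congrFun (congrFun hDg2 l) l
      rw [Matrix.diagonal_apply_eq, Matrix.mul_assoc, Matrix.mul_apply] at h
      rw [h]
      apply Finset.sum_congr rfl
      intro m _
      rw [Matrix.diagonal_mul, Matrix.transpose_apply]
      simp only [Matrix.mul_apply, Matrix.mulVec, dotProduct, Matrix.transpose_apply]
      ring
    rw [hγeq]
    calc ∑ m, lamt m * ((Aᵀ *ᵥ (fun i => U i l)) m) ^ 2
        ≤ ∑ m, lmax * ((Aᵀ *ᵥ (fun i => U i l)) m) ^ 2 :=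
          Finset.sum_le_sum fun m _ => mul_le_mul_of_nonneg_right (hlmaxle m) (sq_nonneg _)
      _ = lmax * ∑ m, ((Aᵀ *ᵥ (fun i => U i l)) m) ^ 2 := by rw [Finset.mul_sum]
      _ ≤ lmax * (smax ^ 2 * ∑ i, (U i l) ^ 2) :=
          mul_le_mul_of_nonneg_left (hsmaxT _) hlmax_pos.le
      _ = smax ^ 2 * lmax := by rw [hcol l]; ring
  -- A = U * Uᵀ * A
  have hPA : U * (Uᵀ * A) = A := by
    set C := A * diagonal (fun x => Real.sqrt (lamt x)) with hC
    have hCC : C * Cᵀ = A * diagonal lamt * Aᵀ := by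
      rw [hC, Matrix.transpose_mul, Matrix.diagonal_transpose, Matrix.mul_assoc,
        ← Matrix.mul_assoc (diagonal _), Matrix.diagonal_mul_diagonal, ← Matrix.mul_assoc]
      have hf : (fun i => Real.sqrt (lamt i) * Real.sqrt (lamt i)) = lamt :=
        funext fun x => Real.mul_self_sqrt (hlamt x).le
      rw [hf]
    have h1 : U * Uᵀ * (C * Cᵀ) = C * Cᵀ := by
      rw [hCC, ← hSVD]
      simp only [← Matrix.mul_assoc]
      rw [Matrix.mul_assoc U Uᵀ U, hU, Matrix.mul_one]
    have hsym : (U * Uᵀ)ᵀ = U * Uᵀ := by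
      rw [Matrix.transpose_mul, Matrix.transpose_transpose]
    have hCsym : (C * Cᵀ)ᵀ = C * Cᵀ := by
      rw [Matrix.transpose_mul, Matrix.transpose_transpose]
    have h3 : (C * Cᵀ) * (U * Uᵀ) = C * Cᵀ := by
      have h := congrArg Matrix.transpose h1
      rwa [Matrix.transpose_mul, hCsym, hsym] at h
    have t2 : (U * Uᵀ * C) * Cᵀ = C * Cᵀ := by rw [Matrix.mul_assoc]; exact h1
    have t3 : C * (U * Uᵀ * C)ᵀ = C * Cᵀ := by
      rw [Matrix.transpose_mul, hsym, ← Matrix.mul_assoc]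
      exact h3
    have t1 : (U * Uᵀ * C) * (U * Uᵀ * C)ᵀ = C * Cᵀ := by
      rw [Matrix.mul_assoc, t3]; exact h1
    have h2 : (U * Uᵀ * C - C) * (U * Uᵀ * C - C)ᵀ = 0 := by
      rw [Matrix.transpose_sub, Matrix.mul_sub, Matrix.sub_mul, Matrix.sub_mul,
        t1, t2, t3]
      simp
    have hct : (U * Uᵀ * C - C) * (U * Uᵀ * C - C)ᴴ = 0 := by
      have : (U * Uᵀ * C - C)ᴴ = (U * Uᵀ * C - C)ᵀ := by
        ext i j; simp [Matrix.conjTranspose_apply]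
      rw [this]; exact h2
    have hzero : U * Uᵀ * C - C = 0 := Matrix.self_mul_conjTranspose_eq_zero.mp hct
    have hPC : U * Uᵀ * C = C := by rwa [sub_eq_zero] at hzero
    have hCD : C * diagonal (fun x => (Real.sqrt (lamt x))⁻¹) = A := by
      rw [hC, Matrix.mul_assoc, Matrix.diagonal_mul_diagonal]
      have he : (fun x => Real.sqrt (lamt x) * (Real.sqrt (lamt x))⁻¹) = fun _ => (1:ℝ) := by
        funext x
        exact mul_inv_cancel₀ (ne_of_gt (Real.sqrt_pos.2 (hlamt x)))
      rw [he, Matrix.diagonal_one, Matrix.mul_one]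
    rw [← Matrix.mul_assoc, ← hCD, ← Matrix.mul_assoc, hPC]
  have hsl_pos : (0:ℝ) < Real.sqrt (lamt j) := Real.sqrt_pos.2 (hlamt j)
  -- A entries from whitened components
  have hAeq : ∀ i, A i j = (Real.sqrt (lamt j))⁻¹ * ∑ l, U i l * Real.sqrt (γ l) * v j l := by
    intro i
    have hsum : ∑ l, U i l * Real.sqrt (γ l) * v j l = Real.sqrt (lamt j) * A i j := by
      calc ∑ l, U i l * Real.sqrt (γ l) * v j l
          = ∑ l, Real.sqrt (lamt j) * (U i l * (Uᵀ * A) l j) := by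
            apply Finset.sum_congr rfl
            intro l _
            rw [hv j l, hW]
            have hs : ∑ a, (U * diagonal (fun x => (Real.sqrt (γ x))⁻¹)) a l * A a j
                = (Real.sqrt (γ l))⁻¹ * (Uᵀ * A) l j := by
              rw [Matrix.mul_apply, Finset.mul_sum]
              apply Finset.sum_congr rfl
              intro a _
              rw [Matrix.mul_diagonal, Matrix.transpose_apply]
              ring
            rw [hs]
            have hne : Real.sqrt (γ l) ≠ 0 := ne_of_gt (Real.sqrt_pos.2 (hγ l))
            field_simp
        _ = Real.sqrt (lamt j) * (U * (Uᵀ * A)) i j := by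
            rw [Matrix.mul_apply, Finset.mul_sum]
        _ = Real.sqrt (lamt j) * A i j := by rw [hPA]
    rw [hsum, ← mul_assoc, inv_mul_cancel₀ (ne_of_gt hsl_pos), one_mul]
  -- difference expression
  set c : Fin k → ℝ := fun l => Real.sqrt (γ l) * (v j l - vhat j l) with hc
  have hkey : ∀ i, A i j - Ahat i j = (Real.sqrt (lamt j))⁻¹ * (U *ᵥ c) i := by
    intro i
    rw [hAeq i, hAhat i j, ← mul_sub, ← Finset.sum_sub_distrib]
    congr 1
    simp only [Matrix.mulVec, dotProduct, hc]
    apply Finset.sum_congr rfl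
    intro l _
    ring
  -- norm preservation under U
  have hnorm : ∑ i, ((U *ᵥ c) i) ^ 2 = ∑ l, (c l) ^ 2 := by
    have h1 : (U *ᵥ c) ⬝ᵥ (U *ᵥ c) = c ⬝ᵥ c := by
      rw [Matrix.dotProduct_mulVec, ← Matrix.mulVec_transpose, Matrix.mulVec_mulVec, hU,
        Matrix.one_mulVec]
    simpa [dotProduct, pow_two] using h1
  -- squared error norm
  have hS : ∑ i, (A i j - Ahat i j) ^ 2
      = (lamt j)⁻¹ * ∑ l, γ l * (v j l - vhat j l) ^ 2 := by
    calc ∑ i, (A i j - Ahat i j) ^ 2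
        = ∑ i, ((Real.sqrt (lamt j))⁻¹) ^ 2 * ((U *ᵥ c) i) ^ 2 := by
          apply Finset.sum_congr rfl
          intro i _
          rw [hkey i, mul_pow]
      _ = ((Real.sqrt (lamt j))⁻¹) ^ 2 * ∑ i, ((U *ᵥ c) i) ^ 2 := by rw [Finset.mul_sum]
      _ = (lamt j)⁻¹ * ∑ l, (c l) ^ 2 := by
          rw [hnorm, inv_pow, Real.sq_sqrt (hlamt j).le]
      _ = (lamt j)⁻¹ * ∑ l, γ l * (v j l - vhat j l) ^ 2 := by
          congr 1
          apply Finset.sum_congr rfl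
          intro l _
          rw [hc, mul_pow, Real.sq_sqrt (hγ l).le]
  -- final bound
  set E := ∑ i, (v j i - vhat j i) ^ 2 with hE
  have hE0 : 0 ≤ E := Finset.sum_nonneg fun _ _ => sq_nonneg _
  have hbound : ∑ i, (A i j - Ahat i j) ^ 2 ≤ smax ^ 2 * (lmax / lmin) * E := by
    rw [hS]
    have h1 : ∑ l, γ l * (v j l - vhat j l) ^ 2 ≤ (smax ^ 2 * lmax) * E := by
      rw [hE, Finset.mul_sum]
      exact Finset.sum_le_sum fun l _ => mul_le_mul_of_nonneg_right (hγle l) (sq_nonneg _)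
    have h2 : (lamt j)⁻¹ ≤ lmin⁻¹ := inv_anti₀ hlmin_pos hlminle
    have h3 : 0 ≤ ∑ l, γ l * (v j l - vhat j l) ^ 2 :=
      Finset.sum_nonneg fun l _ => mul_nonneg (hγ l).le (sq_nonneg _)
    calc (lamt j)⁻¹ * ∑ l, γ l * (v j l - vhat j l) ^ 2
        ≤ lmin⁻¹ * ∑ l, γ l * (v j l - vhat j l) ^ 2 :=
          mul_le_mul_of_nonneg_right h2 h3
      _ ≤ lmin⁻¹ * ((smax ^ 2 * lmax) * E) :=
          mul_le_mul_of_nonneg_left h1 (inv_nonneg.2 hlmin_pos.le)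
      _ = smax ^ 2 * (lmax / lmin) * E := by rw [div_eq_mul_inv]; ring
  calc Real.sqrt (∑ i, (A i j - Ahat i j) ^ 2)
      ≤ Real.sqrt (smax ^ 2 * (lmax / lmin) * E) := Real.sqrt_le_sqrt hbound
    _ = smax * Real.sqrt (lmax / lmin) * Real.sqrt E := by
        rw [Real.sqrt_mul (by positivity), Real.sqrt_mul (sq_nonneg smax),
          Real.sqrt_sq hsmax0]
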